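/- For every natural number g, the number of permutations σ of {1, …, g} that avoid the pattern 1,2,3 — i.e., for which there is no triple of indices i < j < k with σ(i) < σ(j) < σ(k) — equals the g-th Catalan number C_g. -/

import Mathlib

open Finset

namespace CatalanAux

section FinsetPart

variable {n : ℕ}

/-- Number of elements of `s` below the `i`-th element of `s`. -/
lemma card_filter_lt_orderEmbOfFin (s : Finset (Fin n)) {k : ℕ} (h : s.card = k) (i : Fin k) :
    (s.filter (fun y => y < s.orderEmbOfFin h i)).card = i := by
  classical
  have himg : s.filter (fun y => y < s.orderEmbOfFin h i)
      = (Finset.Iio i).image (s.orderEmbOfFin h) := by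
    ext y
    simp only [mem_filter, mem_image, Finset.mem_Iio]
    constructor
    · rintro ⟨hy, hlt⟩
      have : y ∈ Set.range (s.orderEmbOfFin h) := by
        rw [Finset.range_orderEmbOfFin]; exact hy
      obtain ⟨j, rfl⟩ := this
      exact ⟨j, (s.orderEmbOfFin h).strictMono.lt_iff_lt.mp hlt, rfl⟩
    · rintro ⟨j, hj, rfl⟩
      exact ⟨Finset.orderEmbOfFin_mem _ _ _, (s.orderEmbOfFin h).strictMono hj⟩
  rw [himg, Finset.card_image_of_injective _ (s.orderEmbOfFin h).injective, Fin.card_Iio]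

lemma card_filter_le_orderEmbOfFin (s : Finset (Fin n)) {k : ℕ} (h : s.card = k) (i : Fin k) :
    (s.filter (fun y => y ≤ s.orderEmbOfFin h i)).card = i + 1 := by
  classical
  have himg : s.filter (fun y => y ≤ s.orderEmbOfFin h i)
      = (Finset.Iic i).image (s.orderEmbOfFin h) := by
    ext y
    simp only [mem_filter, mem_image, Finset.mem_Iic]
    constructor
    · rintro ⟨hy, hle⟩
      have : y ∈ Set.range (s.orderEmbOfFin h) := by
        rw [Finset.range_orderEmbOfFin]; exact hy
      obtain ⟨j, rfl⟩ := this
      exact ⟨j, (s.orderEmbOfFin h).strictMono.le_iff_le.mp hle, rfl⟩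
    · rintro ⟨j, hj, rfl⟩
      exact ⟨Finset.orderEmbOfFin_mem _ _ _, (s.orderEmbOfFin h).strictMono.monotone hj⟩
  rw [himg, Finset.card_image_of_injective _ (s.orderEmbOfFin h).injective, Fin.card_Iic]

lemma orderEmbOfFin_lt_of_card (s : Finset (Fin n)) {k : ℕ} (h : s.card = k) (i : Fin k)
    {a : Fin n} (hcard : (i : ℕ) + 1 ≤ (s.filter (fun y => y < a)).card) :
    s.orderEmbOfFin h i < a := by
  by_contra hc
  push_neg at hc
  have hsub : s.filter (fun y => y < a) ⊆ s.filter (fun y => y < s.orderEmbOfFin h i) := by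
    intro y hy
    rw [mem_filter] at hy ⊢
    exact ⟨hy.1, lt_of_lt_of_le hy.2 hc⟩
  have := Finset.card_le_card hsub
  rw [card_filter_lt_orderEmbOfFin] at this
  omega

lemma orderEmbOfFin_le_of_card (s : Finset (Fin n)) {k : ℕ} (h : s.card = k) (i : Fin k)
    {a : Fin n} (hcard : (i : ℕ) + 1 ≤ (s.filter (fun y => y ≤ a)).card) :
    s.orderEmbOfFin h i ≤ a := by
  by_contra hc
  push_neg at hc
  have hsub : s.filter (fun y => y ≤ a) ⊆ s.filter (fun y => y < s.orderEmbOfFin h i) := by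
    intro y hy
    rw [mem_filter] at hy ⊢
    exact ⟨hy.1, lt_of_le_of_lt hy.2 hc⟩
  have := Finset.card_le_card hsub
  rw [card_filter_lt_orderEmbOfFin] at this
  omega

/-- Partition of a filter between a set and its complement. -/
lemma card_filter_add_card_filter_compl (s : Finset (Fin n)) (p : Fin n → Prop)
    [DecidablePred p] :
    (s.filter p).card + (sᶜ.filter p).card = (univ.filter p).card := by
  classical
  rw [← Finset.card_union_of_disjoint, ← Finset.filter_union, Finset.union_compl]
  exact Finset.disjoint_filter_filter (disjoint_compl_right)


/-- The dominance condition on a pair of finsets (excedance positions, excedance values). -/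
def Dom (P V : Finset (Fin n)) : Prop :=
  V.card = P.card ∧ ∀ t : Fin n, (V.filter (· ≤ t)).card ≤ (P.filter (· < t)).card

instance (P V : Finset (Fin n)) : Decidable (Dom P V) := by unfold Dom; infer_instance

lemma compl_card_eq {P V : Finset (Fin n)} (hc : V.card = P.card) : Vᶜ.card = Pᶜ.card := by
  rw [Finset.card_compl, Finset.card_compl, hc]

/-- The filling function: on `P` the increasing enumeration of `V`, on `Pᶜ` that of `Vᶜ`. -/
def fillFun (P V : Finset (Fin n)) (hc : V.card = P.card) (x : Fin n) : Fin n :=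
  if h : x ∈ P then V.orderEmbOfFin hc ((P.orderIsoOfFin rfl).symm ⟨x, h⟩)
  else Vᶜ.orderEmbOfFin (compl_card_eq hc)
    ((Pᶜ.orderIsoOfFin rfl).symm ⟨x, by simpa using h⟩)

lemma orderEmbOfFin_symm_index (s : Finset (Fin n)) (x : Fin n) (h : x ∈ s) :
    s.orderEmbOfFin rfl ((s.orderIsoOfFin rfl).symm ⟨x, h⟩) = x := by
  have : (s.orderEmbOfFin rfl ((s.orderIsoOfFin rfl).symm ⟨x, h⟩) : Fin n)
      = ((s.orderIsoOfFin rfl) ((s.orderIsoOfFin rfl).symm ⟨x, h⟩) : Fin n) :=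
    Finset.coe_orderIsoOfFin_apply s rfl _
  rw [this, OrderIso.apply_symm_apply]

variable {P V : Finset (Fin n)} (hc : V.card = P.card)

lemma fillFun_mem {x : Fin n} (h : x ∈ P) : fillFun P V hc x ∈ V := by
  rw [fillFun, dif_pos h]; exact Finset.orderEmbOfFin_mem _ _ _

lemma fillFun_not_mem {x : Fin n} (h : x ∉ P) : fillFun P V hc x ∉ V := by
  rw [fillFun, dif_neg h]
  have := Finset.orderEmbOfFin_mem Vᶜ (compl_card_eq hc)
    ((Pᶜ.orderIsoOfFin rfl).symm ⟨x, by simpa using h⟩)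
  intro hV
  rw [Finset.mem_compl] at this
  exact this hV

lemma fillFun_strictMonoOn_mem {x y : Fin n} (hx : x ∈ P) (hy : y ∈ P) (hxy : x < y) :
    fillFun P V hc x < fillFun P V hc y := by
  rw [fillFun, dif_pos hx, fillFun, dif_pos hy]
  apply (V.orderEmbOfFin hc).strictMono
  exact (P.orderIsoOfFin rfl).symm.strictMono (by exact hxy)

lemma fillFun_strictMonoOn_not_mem {x y : Fin n} (hx : x ∉ P) (hy : y ∉ P) (hxy : x < y) :
    fillFun P V hc x < fillFun P V hc y := by
  rw [fillFun, dif_neg hx, fillFun, dif_neg hy]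
  apply (Vᶜ.orderEmbOfFin (compl_card_eq hc)).strictMono
  exact (Pᶜ.orderIsoOfFin rfl).symm.strictMono (by exact hxy)

lemma fillFun_injective : Function.Injective (fillFun P V hc) := by
  intro x y hxy
  by_contra hne
  rcases lt_or_gt_of_ne hne with h | h
  all_goals {
    by_cases hx : x ∈ P <;> by_cases hy : y ∈ P
    · first
        | exact absurd hxy (fillFun_strictMonoOn_mem hc hx hy h).ne
        | exact absurd hxy.symm (fillFun_strictMonoOn_mem hc hy hx h).ne
    · exact fillFun_not_mem hc hy (hxy ▸ fillFun_mem hc hx)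
    · exact fillFun_not_mem hc hx (hxy.symm ▸ fillFun_mem hc hy)
    · first
        | exact absurd hxy (fillFun_strictMonoOn_not_mem hc hx hy h).ne
        | exact absurd hxy.symm (fillFun_strictMonoOn_not_mem hc hy hx h).ne }

/-- The filling permutation. -/
noncomputable def fillPerm : Equiv.Perm (Fin n) :=
  Equiv.ofBijective _ (Finite.injective_iff_bijective.mp (fillFun_injective hc))

lemma fillPerm_apply (x : Fin n) : fillPerm hc x = fillFun P V hc x := rfl

lemma lt_fillFun_of_mem (hd : Dom P V) {x : Fin n} (h : x ∈ P) : x < fillFun P V hc x := by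
  rw [fillFun, dif_pos h]
  set i := (P.orderIsoOfFin rfl).symm ⟨x, h⟩ with hi
  have hx : P.orderEmbOfFin rfl i = x := orderEmbOfFin_symm_index P x h
  have h1 : (V.filter (· ≤ V.orderEmbOfFin hc i)).card = i + 1 :=
    card_filter_le_orderEmbOfFin V hc i
  have h2 : (i : ℕ) + 1 ≤ (P.filter (· < V.orderEmbOfFin hc i)).card := by
    rw [← h1]; exact hd.2 _
  have := orderEmbOfFin_lt_of_card P rfl i h2
  rwa [hx] at this

lemma fillFun_le_of_not_mem (hd : Dom P V) {x : Fin n} (h : x ∉ P) :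
    fillFun P V hc x ≤ x := by
  rw [fillFun, dif_neg h]
  have hxP : x ∈ Pᶜ := by simpa using h
  set j := (Pᶜ.orderIsoOfFin rfl).symm ⟨x, hxP⟩ with hj
  have hx : Pᶜ.orderEmbOfFin rfl j = x := orderEmbOfFin_symm_index Pᶜ x hxP
  apply orderEmbOfFin_le_of_card
  -- need : j + 1 ≤ (Vᶜ.filter (· ≤ x)).card
  have h1 : (Pᶜ.filter (· < x)).card = j := by
    have := card_filter_lt_orderEmbOfFin Pᶜ rfl j
    rwa [hx] at this
  have h2 : (P.filter (· < x)).card + (Pᶜ.filter (· < x)).card = (x : ℕ) := by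
    rw [card_filter_add_card_filter_compl]
    have : univ.filter (· < x) = Finset.Iio x := by ext y; simp
    rw [this, Fin.card_Iio]
  have h3 : (V.filter (· ≤ x)).card + (Vᶜ.filter (· ≤ x)).card = (x : ℕ) + 1 := by
    rw [card_filter_add_card_filter_compl]
    have : univ.filter (· ≤ x) = Finset.Iic x := by ext y; simp
    rw [this, Fin.card_Iic]
  have h4 := hd.2 x
  omega

lemma mem_iff_lt_fillFun (hd : Dom P V) {x : Fin n} : x ∈ P ↔ x < fillFun P V hc x := by
  constructor
  · exact lt_fillFun_of_mem hc hd
  · intro hlt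
    by_contra h
    exact absurd hlt (not_lt.mpr (fillFun_le_of_not_mem hc hd h))


/-- `σ` avoids the pattern 321. -/
def Avoid321 (σ : Equiv.Perm (Fin n)) : Prop :=
  ¬ ∃ i j k : Fin n, i < j ∧ j < k ∧ σ j < σ i ∧ σ k < σ j

instance (σ : Equiv.Perm (Fin n)) : Decidable (Avoid321 σ) := by
  unfold Avoid321; infer_instance

variable {σ : Equiv.Perm (Fin n)}

lemma exc_mono (hσ : Avoid321 σ) {i j : Fin n} (hij : i < j) (hi : i < σ i) (hj : j < σ j) :
    σ i < σ j := by
  by_contra hcon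
  push_neg at hcon
  have hne : σ j ≠ σ i := fun h => (hij.ne (σ.injective h.symm)).elim
  have hlt : σ j < σ i := lt_of_le_of_ne hcon hne
  have key : ∀ v : Fin n, v < σ j → σ.symm v ≤ j := by
    intro v hv
    by_contra hk
    push_neg at hk
    exact hσ ⟨i, j, σ.symm v, hij, hk, hlt, by rwa [Equiv.apply_symm_apply]⟩
  have hinj : Set.InjOn (fun v => σ.symm v) (univ.filter (· < σ j)) :=
    fun a _ b _ hab => σ.symm.injective hab
  have hmaps : ∀ v ∈ univ.filter (· < σ j),
      σ.symm v ∈ (Finset.Iio j).erase i := by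
    intro v hv
    rw [mem_filter] at hv
    rw [Finset.mem_erase, Finset.mem_Iio]
    refine ⟨fun h => ?_, ?_⟩
    · rw [← h, Equiv.apply_symm_apply] at hlt
      exact absurd hv.2 (not_lt.mpr hlt.le)
    · rcases lt_or_eq_of_le (key v hv.2) with h | h
      · exact h
      · exfalso
        have : σ j = v := by rw [← h, Equiv.apply_symm_apply]
        exact absurd this.symm hv.2.ne
  have hcard := Finset.card_le_card_of_injOn _ hmaps hinj
  have h1 : (univ.filter (· < σ j)).card = ((σ j : ℕ)) := by
    have : univ.filter (· < σ j) = Finset.Iio (σ j) := by ext y; simp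
    rw [this, Fin.card_Iio]
  have h2 : ((Finset.Iio j).erase i).card = (j : ℕ) - 1 := by
    rw [Finset.card_erase_of_mem (by simpa using hij), Fin.card_Iio]
  have hjlt : (j : ℕ) < (σ j : ℕ) := hj
  have hij' : (i : ℕ) < (j : ℕ) := hij
  omega

lemma nonexc_mono (hσ : Avoid321 σ) {i j : Fin n} (hij : i < j) (hi : σ i ≤ i) (hj : σ j ≤ j) :
    σ i < σ j := by
  by_contra hcon
  push_neg at hcon
  have hne : σ j ≠ σ i := fun h => (hij.ne (σ.injective h.symm)).elim
  have hlt : σ j < σ i := lt_of_le_of_ne hcon hne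
  have key : ∀ v : Fin n, σ i < v → i ≤ σ.symm v := by
    intro v hv
    by_contra hk
    push_neg at hk
    exact hσ ⟨σ.symm v, i, j, hk, hij, by rwa [Equiv.apply_symm_apply], hlt⟩
  have hinj : Set.InjOn (fun v => σ.symm v) (univ.filter (σ i < ·)) :=
    fun a _ b _ hab => σ.symm.injective hab
  have hmaps : ∀ v ∈ univ.filter (σ i < ·),
      σ.symm v ∈ (Finset.Ioi i).erase j := by
    intro v hv
    rw [mem_filter] at hv
    rw [Finset.mem_erase, Finset.mem_Ioi]
    refine ⟨fun h => ?_, ?_⟩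
    · rw [← h, Equiv.apply_symm_apply] at hlt
      exact absurd hlt (not_lt.mpr hv.2.le)
    · rcases lt_or_eq_of_le (key v hv.2) with h | h
      · exact h
      · exfalso
        have : σ i = v := by rw [h, Equiv.apply_symm_apply]
        exact absurd this.symm hv.2.ne'
  have hcard := Finset.card_le_card_of_injOn _ hmaps hinj
  have h1 : (univ.filter (σ i < ·)).card = n - 1 - ((σ i : ℕ)) := by
    have : univ.filter (σ i < ·) = Finset.Ioi (σ i) := by ext y; simp
    rw [this, Fin.card_Ioi]
  have h2 : ((Finset.Ioi i).erase j).card = n - 1 - (i : ℕ) - 1 := by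
    rw [Finset.card_erase_of_mem (by simpa using hij), Fin.card_Ioi]
  have hσi : (σ i : ℕ) ≤ (i : ℕ) := hi
  have hij' : (i : ℕ) < (j : ℕ) := hij
  have hjn : (j : ℕ) < n := j.isLt
  have hσin : (σ i : ℕ) < n := (σ i).isLt
  omega


variable {σ : Equiv.Perm (Fin n)}

variable {P V : Finset (Fin n)} (hc : V.card = P.card)

/-- The excedance data of a permutation. -/
def excP (σ : Equiv.Perm (Fin n)) : Finset (Fin n) := univ.filter (fun i => i < σ i)
def excV (σ : Equiv.Perm (Fin n)) : Finset (Fin n) := univ.filter (fun v => σ.symm v < v)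

lemma excV_eq_image (σ : Equiv.Perm (Fin n)) : excV σ = (excP σ).image σ := by
  ext v
  simp only [excP, excV, mem_filter, mem_univ, true_and, Finset.mem_image]
  constructor
  · intro h; exact ⟨σ.symm v, by rwa [Equiv.apply_symm_apply], Equiv.apply_symm_apply _ _⟩
  · rintro ⟨i, hi, rfl⟩; rwa [Equiv.symm_apply_apply]

lemma dom_exc (σ : Equiv.Perm (Fin n)) : Dom (excP σ) (excV σ) := by
  constructor
  · rw [excV_eq_image, Finset.card_image_of_injective _ σ.injective]
  · intro t
    apply Finset.card_le_card_of_injOn (fun v => σ.symm v)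
    · intro v hv
      simp only [excV, Finset.mem_coe, mem_filter, mem_univ, true_and] at hv
      simp only [excP, Finset.mem_coe, mem_filter, mem_univ, true_and]
      exact ⟨by rw [Equiv.apply_symm_apply]; exact hv.1, lt_of_lt_of_le hv.1 hv.2⟩
    · exact fun a _ b _ hab => σ.symm.injective hab

/-- A 321-avoiding permutation is the fill of its excedance data. -/
lemma avoid_eq_fill (hσ : Avoid321 σ) :
    σ = fillPerm (n := n) (P := excP σ) (V := excV σ) (dom_exc σ).1 := by
  have hc : (excV σ).card = (excP σ).card := (dom_exc σ).1
  apply Equiv.ext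
  intro x
  rw [fillPerm_apply]
  -- uniqueness of strictly monotone enumerations
  by_cases hx : x ∈ excP σ
  · -- both σ and fill restricted to excP are the unique increasing enumeration of excV
    have hf : ∀ i : Fin (excP σ).card,
        σ ((excP σ).orderEmbOfFin rfl i) = (excV σ).orderEmbOfFin hc i := by
      have := Finset.orderEmbOfFin_unique (s := excV σ) hc
        (f := fun i => σ ((excP σ).orderEmbOfFin rfl i)) ?_ ?_
      · exact fun i => congrFun this i
      · intro i
        have hmem := Finset.orderEmbOfFin_mem (excP σ) rfl i
        simp only [excP, mem_filter, mem_univ, true_and] at hmem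
        simp only [excV, mem_filter, mem_univ, true_and]
        rwa [Equiv.symm_apply_apply]
      · intro a b hab
        have ha := Finset.orderEmbOfFin_mem (excP σ) rfl a
        have hb := Finset.orderEmbOfFin_mem (excP σ) rfl b
        simp only [excP, mem_filter, mem_univ, true_and] at ha hb
        exact exc_mono hσ (((excP σ).orderEmbOfFin rfl).strictMono hab) ha hb
    have hgf : ∀ i : Fin (excP σ).card,
        fillFun (excP σ) (excV σ) hc ((excP σ).orderEmbOfFin rfl i)
          = (excV σ).orderEmbOfFin hc i := by
      have := Finset.orderEmbOfFin_unique (s := excV σ) hc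
        (f := fun i => fillFun (excP σ) (excV σ) hc ((excP σ).orderEmbOfFin rfl i)) ?_ ?_
      · exact fun i => congrFun this i
      · exact fun i => fillFun_mem hc (Finset.orderEmbOfFin_mem (excP σ) rfl i)
      · intro a b hab
        exact fillFun_strictMonoOn_mem hc (Finset.orderEmbOfFin_mem _ _ _)
          (Finset.orderEmbOfFin_mem _ _ _) (((excP σ).orderEmbOfFin rfl).strictMono hab)
    set i := ((excP σ).orderIsoOfFin rfl).symm ⟨x, hx⟩
    have hxi : (excP σ).orderEmbOfFin rfl i = x := orderEmbOfFin_symm_index _ x hx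
    rw [← hxi, hf i, hgf i]
  · have hcc : (excV σ)ᶜ.card = (excP σ)ᶜ.card := compl_card_eq hc
    have hxc : x ∈ (excP σ)ᶜ := by simpa using hx
    have hf : ∀ i : Fin ((excP σ)ᶜ).card,
        σ (((excP σ)ᶜ).orderEmbOfFin rfl i) = ((excV σ)ᶜ).orderEmbOfFin hcc i := by
      have := Finset.orderEmbOfFin_unique (s := (excV σ)ᶜ) hcc
        (f := fun i => σ (((excP σ)ᶜ).orderEmbOfFin rfl i)) ?_ ?_
      · exact fun i => congrFun this i
      · intro i
        have hmem := Finset.orderEmbOfFin_mem ((excP σ)ᶜ) rfl i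
        simp only [excP, Finset.mem_compl, mem_filter, mem_univ, true_and, not_lt] at hmem
        simp only [excV, Finset.mem_compl, mem_filter, mem_univ, true_and, not_lt]
        rwa [Equiv.symm_apply_apply]
      · intro a b hab
        have ha := Finset.orderEmbOfFin_mem ((excP σ)ᶜ) rfl a
        have hb := Finset.orderEmbOfFin_mem ((excP σ)ᶜ) rfl b
        simp only [excP, Finset.mem_compl, mem_filter, mem_univ, true_and, not_lt] at ha hb
        exact nonexc_mono hσ ((((excP σ)ᶜ).orderEmbOfFin rfl).strictMono hab) ha hb
    have hgf : ∀ i : Fin ((excP σ)ᶜ).card,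
        fillFun (excP σ) (excV σ) hc (((excP σ)ᶜ).orderEmbOfFin rfl i)
          = ((excV σ)ᶜ).orderEmbOfFin hcc i := by
      have := Finset.orderEmbOfFin_unique (s := (excV σ)ᶜ) hcc
        (f := fun i => fillFun (excP σ) (excV σ) hc (((excP σ)ᶜ).orderEmbOfFin rfl i)) ?_ ?_
      · exact fun i => congrFun this i
      · intro i
        have hmem := Finset.orderEmbOfFin_mem ((excP σ)ᶜ) rfl i
        rw [Finset.mem_compl] at hmem
        have := fillFun_not_mem (V := excV σ) hc hmem
        simpa using this
      · intro a b hab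
        have ha := Finset.orderEmbOfFin_mem ((excP σ)ᶜ) rfl a
        have hb := Finset.orderEmbOfFin_mem ((excP σ)ᶜ) rfl b
        rw [Finset.mem_compl] at ha hb
        exact fillFun_strictMonoOn_not_mem hc ha hb
          ((((excP σ)ᶜ).orderEmbOfFin rfl).strictMono hab)
    set i := (((excP σ)ᶜ).orderIsoOfFin rfl).symm ⟨x, hxc⟩
    have hxi : ((excP σ)ᶜ).orderEmbOfFin rfl i = x := orderEmbOfFin_symm_index _ x hxc
    rw [← hxi, hf i, hgf i]

/-- The fill of any pair avoids 321. -/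
lemma fill_avoids : Avoid321 (fillPerm (P := P) (V := V) hc) := by
  rintro ⟨i, j, k, hij, hjk, h1, h2⟩
  simp only [fillPerm_apply] at h1 h2
  by_cases hi : i ∈ P <;> by_cases hj : j ∈ P <;> by_cases hk : k ∈ P
  all_goals first
    | exact absurd (fillFun_strictMonoOn_mem hc hi hj hij) (not_lt.mpr h1.le)
    | exact absurd (fillFun_strictMonoOn_mem hc hj hk hjk) (not_lt.mpr h2.le)
    | exact absurd (fillFun_strictMonoOn_mem hc hi hk (hij.trans hjk)) (not_lt.mpr (h2.trans h1).le)
    | exact absurd (fillFun_strictMonoOn_not_mem hc hi hj hij) (not_lt.mpr h1.le)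
    | exact absurd (fillFun_strictMonoOn_not_mem hc hj hk hjk) (not_lt.mpr h2.le)
    | exact absurd (fillFun_strictMonoOn_not_mem hc hi hk (hij.trans hjk))
        (not_lt.mpr (h2.trans h1).le)

/-- Excedance data of the fill recovers the pair. -/
lemma exc_fill (hd : Dom P V) :
    excP (fillPerm (P := P) (V := V) hc) = P ∧ excV (fillPerm (P := P) (V := V) hc) = V := by
  have hP : excP (fillPerm (P := P) (V := V) hc) = P := by
    ext x
    simp only [excP, mem_filter, mem_univ, true_and, fillPerm_apply]
    exact (Finset.mem_filter.trans (and_iff_right (mem_univ x))).trans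
      (mem_iff_lt_fillFun (x := x) hc hd).symm
  refine ⟨hP, ?_⟩
  rw [excV_eq_image, hP]
  ext v
  simp only [Finset.mem_image]
  constructor
  · rintro ⟨x, hx, rfl⟩
    exact fillFun_mem hc hx
  · intro hv
    set x := (fillPerm (P := P) (V := V) hc).symm v with hxd
    have hfx : fillFun P V hc x = v := by
      rw [← fillPerm_apply hc]; exact Equiv.apply_symm_apply _ _
    refine ⟨x, ?_, hfx⟩
    by_contra hx
    exact fillFun_not_mem hc hx (hfx ▸ hv)


end FinsetPart

section DyckPart

open List DyckStep

/-- Encoding a pair of subsets of `range n` (given as a function to pairs of Booleans: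
value-membership, position-membership) as a list of Dyck steps. -/
def enc (f : ℕ → Bool × Bool) : ℕ → List DyckStep
  | 0 => []
  | t + 1 => enc f t ++ [if (f t).1 then D else U, if (f t).2 then U else D]

/-- `Vc f t` : number of `s < t` in the "value" set. -/
def Vc (f : ℕ → Bool × Bool) (t : ℕ) : ℕ := ((Finset.range t).filter (fun s => (f s).1 = true)).card
/-- `Pc f t` : number of `s < t` in the "position" set. -/
def Pc (f : ℕ → Bool × Bool) (t : ℕ) : ℕ := ((Finset.range t).filter (fun s => (f s).2 = true)).card

variable (f : ℕ → Bool × Bool)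

lemma Vc_succ (t : ℕ) : Vc f (t + 1) = Vc f t + (if (f t).1 then 1 else 0) := by
  rw [Vc, Vc, Finset.range_add_one, filter_insert]
  by_cases h : (f t).1 <;> simp [h, Finset.card_insert_of_notMem]

lemma Pc_succ (t : ℕ) : Pc f (t + 1) = Pc f t + (if (f t).2 then 1 else 0) := by
  rw [Pc, Pc, Finset.range_add_one, filter_insert]
  by_cases h : (f t).2 <;> simp [h, Finset.card_insert_of_notMem]

lemma Vc_mono {s t : ℕ} (h : s ≤ t) : Vc f s ≤ Vc f t :=
  Finset.card_le_card (α := ℕ) (Finset.filter_subset_filter _ (Finset.range_subset_range.mpr h))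

lemma Pc_mono {s t : ℕ} (h : s ≤ t) : Pc f s ≤ Pc f t :=
  Finset.card_le_card (α := ℕ) (Finset.filter_subset_filter _ (Finset.range_subset_range.mpr h))

lemma Vc_le (t : ℕ) : Vc f t ≤ t := by
  rw [Vc]
  simpa using Finset.card_le_card (Finset.filter_subset (fun s => (f s).1 = true) (range t))

lemma Pc_le (t : ℕ) : Pc f t ≤ t := by
  rw [Pc]
  simpa using Finset.card_le_card (Finset.filter_subset (fun s => (f s).2 = true) (range t))

lemma enc_length (t : ℕ) : (enc f t).length = 2 * t := by
  induction t with
  | zero => rfl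
  | succ t ih => rw [enc, List.length_append, ih]; simp; omega

lemma count_D_enc (t : ℕ) : (enc f t).count D + Pc f t = Vc f t + t := by
  induction t with
  | zero => simp [enc, Vc, Pc]
  | succ t ih =>
    rw [enc, List.count_append, Vc_succ, Pc_succ]
    by_cases h1 : (f t).1 <;> by_cases h2 : (f t).2 <;>
      simp [h1, h2, List.count_cons, List.count_singleton] <;> omega

lemma count_U_enc (t : ℕ) : (enc f t).count U + Vc f t = Pc f t + t := by
  induction t with
  | zero => simp [enc, Vc, Pc]
  | succ t ih =>
    rw [enc, List.count_append, Vc_succ, Pc_succ]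
    by_cases h1 : (f t).1 <;> by_cases h2 : (f t).2 <;>
      simp [h1, h2, List.count_cons, List.count_singleton] <;> omega

lemma take_enc_even {t m : ℕ} (h : t ≤ m) : (enc f m).take (2 * t) = enc f t := by
  induction m with
  | zero => have : t = 0 := by omega
            subst this; simp [enc]
  | succ m ih =>
    rcases Nat.lt_or_ge t (m + 1) with h' | h'
    · have ht : t ≤ m := by omega
      rw [enc, List.take_append, ih ht]
      have : 2 * t - (enc f m).length = 0 := by rw [enc_length]; omega
      rw [this]
      simp
    · have : t = m + 1 := by omega
      subst this
      rw [List.take_of_length_le (by rw [enc_length])]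

lemma take_enc_odd {t m : ℕ} (h : t < m) :
    (enc f m).take (2 * t + 1) = enc f t ++ [if (f t).1 then D else U] := by
  have h1 : (enc f m).take (2 * t + 1) = ((enc f m).take (2 * (t+1))).take (2 * t + 1) := by
    rw [List.take_take]
    congr 1
    omega
  rw [h1, take_enc_even f h, enc, List.take_append]
  have h2 : 2 * t + 1 - (enc f t).length = 1 := by rw [enc_length]; omega
  rw [List.take_of_length_le (by rw [enc_length]; omega), h2]
  simp

lemma enc_getElem?_even {t m : ℕ} (h : t < m) :
    (enc f m)[2 * t]? = some (if (f t).1 then D else U) := by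
  have h1 : (enc f m)[2 * t]? = ((enc f m).take (2 * t + 1))[2 * t]? := by
    rw [List.getElem?_take, if_pos (by omega)]
  rw [h1, take_enc_odd f h, List.getElem?_append_right (by simp [enc_length])]
  rw [enc_length]
  simp

lemma enc_getElem?_odd {t m : ℕ} (h : t < m) :
    (enc f m)[2 * t + 1]? = some (if (f t).2 then U else D) := by
  have h1 : (enc f m)[2 * t + 1]? = ((enc f m).take (2 * (t + 1)))[2 * t + 1]? := by
    rw [List.getElem?_take, if_pos (by omega)]
  rw [h1, take_enc_even f (by omega : t + 1 ≤ m), enc]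
  rw [List.getElem?_append_right (by rw [enc_length]; omega), enc_length]
  have : 2 * t + 1 - 2 * t = 1 := by omega
  rw [this]
  simp


variable {n : ℕ}

/-- The Boolean membership function of a pair of subsets of `Fin n`. -/
def pairF (P V : Finset (Fin n)) : ℕ → Bool × Bool := fun t =>
  if h : t < n then (decide ((⟨t, h⟩ : Fin n) ∈ V), decide ((⟨t, h⟩ : Fin n) ∈ P)) else
    (false, false)

lemma Vc_pairF (P V : Finset (Fin n)) {t : ℕ} (h : t ≤ n) :
    Vc (pairF P V) t = (V.filter (fun v : Fin n => (v : ℕ) < t)).card := by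
  rw [Vc]
  apply Finset.card_bij (fun (s : ℕ) (hs : s ∈ (Finset.range t).filter
    (fun s => (pairF P V s).1 = true)) => (⟨s, by
      rw [Finset.mem_filter, Finset.mem_range] at hs; omega⟩ : Fin n))
  · intro s hs
    rw [Finset.mem_filter, Finset.mem_range] at hs
    have hsn : s < n := by omega
    rw [Finset.mem_filter]
    refine ⟨?_, hs.1⟩
    have := hs.2
    rw [pairF, dif_pos hsn] at this
    simpa using this
  · intro a ha b hb hab
    simpa using congrArg Fin.val hab
  · intro v hv
    rw [Finset.mem_filter] at hv
    refine ⟨(v : ℕ), ?_, by simp⟩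
    rw [Finset.mem_filter, Finset.mem_range]
    refine ⟨hv.2, ?_⟩
    rw [pairF, dif_pos v.isLt]
    simpa using hv.1

lemma Pc_pairF (P V : Finset (Fin n)) {t : ℕ} (h : t ≤ n) :
    Pc (pairF P V) t = (P.filter (fun v : Fin n => (v : ℕ) < t)).card := by
  rw [Pc]
  apply Finset.card_bij (fun (s : ℕ) (hs : s ∈ (Finset.range t).filter
    (fun s => (pairF P V s).2 = true)) => (⟨s, by
      rw [Finset.mem_filter, Finset.mem_range] at hs; omega⟩ : Fin n))
  · intro s hs
    rw [Finset.mem_filter, Finset.mem_range] at hs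
    have hsn : s < n := by omega
    rw [Finset.mem_filter]
    refine ⟨?_, hs.1⟩
    have := hs.2
    rw [pairF, dif_pos hsn] at this
    simpa using this
  · intro a ha b hb hab
    simpa using congrArg Fin.val hab
  · intro v hv
    rw [Finset.mem_filter] at hv
    refine ⟨(v : ℕ), ?_, by simp⟩
    rw [Finset.mem_filter, Finset.mem_range]
    refine ⟨hv.2, ?_⟩
    rw [pairF, dif_pos v.isLt]
    simpa using hv.1

/-- Dominance in terms of counting functions. -/
lemma dom_iff_counts (P V : Finset (Fin n)) :
    Dom P V ↔ (Vc (pairF P V) n = Pc (pairF P V) n ∧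
      ∀ t : ℕ, t < n → Vc (pairF P V) (t + 1) ≤ Pc (pairF P V) t) := by
  constructor
  · rintro ⟨hcard, hdom⟩
    constructor
    · rw [Vc_pairF P V le_rfl, Pc_pairF P V le_rfl]
      rw [Finset.filter_true_of_mem (fun v _ => v.isLt),
        Finset.filter_true_of_mem (fun v _ => v.isLt)]
      exact hcard
    · intro t ht
      rw [Vc_pairF P V (by omega), Pc_pairF P V (by omega)]
      have h1 : V.filter (fun v : Fin n => (v : ℕ) < t + 1) = V.filter (· ≤ (⟨t, ht⟩ : Fin n)) := by
        ext v; simp [Fin.le_def, Nat.lt_succ_iff]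
      have h2 : P.filter (fun v : Fin n => (v : ℕ) < t) = P.filter (· < (⟨t, ht⟩ : Fin n)) := by
        ext v; simp [Fin.lt_def]
      rw [h1, h2]
      exact hdom _
  · rintro ⟨hbal, hdom⟩
    constructor
    · have := hbal
      rw [Vc_pairF P V le_rfl, Pc_pairF P V le_rfl,
        Finset.filter_true_of_mem (fun v _ => v.isLt),
        Finset.filter_true_of_mem (fun v _ => v.isLt)] at this
      exact this
    · intro tf
      have := hdom tf.val tf.isLt
      rw [Vc_pairF P V (by omega), Pc_pairF P V (by omega)] at this
      have h1 : V.filter (fun v : Fin n => (v : ℕ) < tf.val + 1) = V.filter (· ≤ tf) := by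
        ext v
        simp only [Finset.mem_filter]
        exact and_congr_right fun _ => by rw [Fin.le_def]; omega
      have h2 : P.filter (fun v : Fin n => (v : ℕ) < tf.val) = P.filter (· < tf) := by
        ext v
        simp only [Finset.mem_filter]
        exact and_congr_right fun _ => by rw [Fin.lt_def]
      rwa [h1, h2] at this

/-- The Dyck word associated to a dominated pair. -/
def toDyck (P V : Finset (Fin n)) (hd : Dom P V) : DyckWord where
  toList := enc (pairF P V) n
  count_U_eq_count_D := by
    obtain ⟨hbal, -⟩ := (dom_iff_counts P V).mp hd
    have h1 := count_D_enc (pairF P V) n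
    have h2 := count_U_enc (pairF P V) n
    omega
  count_D_le_count_U := by
    obtain ⟨hbal, hdom⟩ := (dom_iff_counts P V).mp hd
    have key : ∀ t : ℕ, t ≤ n → Vc (pairF P V) t ≤ Pc (pairF P V) t := by
      intro t ht
      cases t with
      | zero => simp [Vc, Pc]
      | succ s =>
        exact le_trans (hdom s (by omega)) (Pc_mono _ (by omega))
    intro i
    rcases Nat.lt_or_ge i (2 * n) with hi | hi
    · rcases Nat.even_or_odd i with ⟨t, ht2⟩ | ⟨t, ht2⟩
      · have hteq : i = 2 * t := by omega
        have ht : t ≤ n := by omega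
        subst hteq
        rw [take_enc_even _ ht]
        have h1 := count_D_enc (pairF P V) t
        have h2 := count_U_enc (pairF P V) t
        have h3 := key t ht
        omega
      · have hteq : i = 2 * t + 1 := by omega
        have ht : t < n := by omega
        subst hteq
        rw [take_enc_odd _ ht]
        rw [List.count_append, List.count_append]
        have h1 := count_D_enc (pairF P V) t
        have h2 := count_U_enc (pairF P V) t
        have h3 := hdom t ht
        have h4 := Vc_succ (pairF P V) t
        have h5 := Vc_le (pairF P V) t
        have h6 := Pc_le (pairF P V) t
        by_cases hv : (pairF P V t).1 <;> simp [hv] at h4 ⊢ <;> omega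
    · rw [List.take_of_length_le (by rw [enc_length]; omega)]
      have h1 := count_D_enc (pairF P V) n
      have h2 := count_U_enc (pairF P V) n
      omega

lemma toDyck_toList (P V : Finset (Fin n)) (hd : Dom P V) :
    (toDyck P V hd).toList = enc (pairF P V) n := by rw [toDyck]

lemma toDyck_semilength (P V : Finset (Fin n)) (hd : Dom P V) :
    (toDyck P V hd).semilength = n := by
  have := (toDyck P V hd).two_mul_semilength_eq_length
  rw [toDyck_toList, enc_length] at this
  omega


/-- Decoded position set of a Dyck word. -/
def decP (n : ℕ) (w : DyckWord) : Finset (Fin n) :=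
  univ.filter (fun t : Fin n => w.toList.getD (2 * t.val + 1) D = U)
/-- Decoded value set of a Dyck word. -/
def decV (n : ℕ) (w : DyckWord) : Finset (Fin n) :=
  univ.filter (fun t : Fin n => w.toList.getD (2 * t.val) U = D)

lemma pairF_dec (w : DyckWord) (t : ℕ) (ht : t < n) :
    pairF (decP n w) (decV n w) t =
      (decide (w.toList.getD (2 * t) U = D), decide (w.toList.getD (2 * t + 1) D = U)) := by
  rw [pairF, dif_pos ht]
  simp [decP, decV]

/-- Encoding the decoded pair recovers the Dyck word. -/
lemma enc_dec (w : DyckWord) (hw : w.semilength = n) :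
    enc (pairF (decP n w) (decV n w)) n = w.toList := by
  have hlen : w.toList.length = 2 * n := by
    have := w.two_mul_semilength_eq_length
    omega
  apply List.ext_getElem?
  intro i
  rcases Nat.lt_or_ge i (2 * n) with hi | hi
  · rcases Nat.even_or_odd i with ⟨t, ht2⟩ | ⟨t, ht2⟩
    · have hteq : i = 2 * t := by omega
      have ht : t < n := by omega
      subst hteq
      rw [enc_getElem?_even _ ht, pairF_dec w t ht]
      have hin : 2 * t < w.toList.length := by omega
      rw [List.getElem?_eq_getElem hin]
      have hgetD : w.toList.getD (2 * t) U = w.toList[2 * t]'hin := List.getD_eq_getElem _ _ hin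
      rcases (w.toList[2 * t]'hin).dichotomy with h | h <;> rw [hgetD, h] <;> simp
    · have hteq : i = 2 * t + 1 := by omega
      have ht : t < n := by omega
      subst hteq
      rw [enc_getElem?_odd _ ht, pairF_dec w t ht]
      have hin : 2 * t + 1 < w.toList.length := by omega
      rw [List.getElem?_eq_getElem hin]
      have hgetD : w.toList.getD (2 * t + 1) D = w.toList[2 * t + 1]'hin :=
        List.getD_eq_getElem _ _ hin
      rcases (w.toList[2 * t + 1]'hin).dichotomy with h | h <;> rw [hgetD, h] <;> simp
  · rw [List.getElem?_eq_none (by rw [enc_length]; omega),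
      List.getElem?_eq_none (by omega)]

/-- The decoded pair of a Dyck word of semilength `n` is dominated. -/
lemma dom_dec (w : DyckWord) (hw : w.semilength = n) : Dom (decP n w) (decV n w) := by
  rw [dom_iff_counts]
  set f := pairF (decP n w) (decV n w) with hf
  have henc : enc f n = w.toList := enc_dec w hw
  constructor
  · have hbal := w.count_U_eq_count_D
    rw [← henc] at hbal
    have h1 := count_D_enc f n
    have h2 := count_U_enc f n
    omega
  · intro t ht
    have hpre := w.count_D_le_count_U (2 * t + 1)
    rw [← henc, take_enc_odd f ht, List.count_append, List.count_append] at hpre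
    have h1 := count_D_enc f t
    have h2 := count_U_enc f t
    have h4 := Vc_succ f t
    have h5 := Vc_le f t
    have h6 := Pc_le f t
    by_cases hv : (f t).1 <;> simp [hv] at h4 hpre ⊢ <;> omega

/-- Equivalence between dominated pairs and Dyck words of semilength `n`. -/
noncomputable def pairsEquiv (n : ℕ) :
    {PV : Finset (Fin n) × Finset (Fin n) // Dom PV.1 PV.2} ≃
      {w : DyckWord // w.semilength = n} where
  toFun x := ⟨toDyck x.1.1 x.1.2 x.2, toDyck_semilength _ _ _⟩
  invFun x := ⟨(decP n x.1, decV n x.1), dom_dec x.1 x.2⟩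
  left_inv := by
    rintro ⟨⟨P, V⟩, hd⟩
    apply Subtype.ext
    have hP : decP n (toDyck P V hd) = P := by
      ext t
      rw [decP, Finset.mem_filter, toDyck_toList]
      have := enc_getElem?_odd (pairF P V) t.isLt
      have hgd : (enc (pairF P V) n).getD (2 * t.val + 1) D
          = (if (pairF P V t.val).2 then U else D) := by
        rw [List.getD_eq_getElem?_getD, this]; rfl
      rw [hgd, pairF, dif_pos t.isLt]
      by_cases h : t ∈ P <;> simp [h, Fin.eta]
    have hV : decV n (toDyck P V hd) = V := by
      ext t
      rw [decV, Finset.mem_filter, toDyck_toList]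
      have := enc_getElem?_even (pairF P V) t.isLt
      have hgd : (enc (pairF P V) n).getD (2 * t.val) U
          = (if (pairF P V t.val).1 then D else U) := by
        rw [List.getD_eq_getElem?_getD, this]; rfl
      rw [hgd, pairF, dif_pos t.isLt]
      by_cases h : t ∈ V <;> simp [h, Fin.eta]
    simp [hP, hV]
  right_inv := by
    rintro ⟨w, hw⟩
    apply Subtype.ext
    apply DyckWord.ext
    rw [toDyck_toList]
    exact enc_dec w hw

/-- The number of dominated pairs is the Catalan number. -/
lemma card_dom_pairs (n : ℕ) :
    (univ.filter (fun PV : Finset (Fin n) × Finset (Fin n) => Dom PV.1 PV.2)).card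
      = catalan n := by
  rw [← Fintype.card_subtype]
  rw [Fintype.card_congr (pairsEquiv n)]
  exact DyckWord.card_dyckWord_semilength_eq_catalan n


end DyckPart

section Assemble

variable {n : ℕ}

lemma avoid123_iff (σ : Equiv.Perm (Fin n)) :
    (¬ ∃ i j k : Fin n, i < j ∧ j < k ∧ σ i < σ j ∧ σ j < σ k) ↔
      Avoid321 (σ * Fin.revPerm) := by
  rw [Avoid321, not_iff_not]
  constructor
  · rintro ⟨a, b, c, hab, hbc, h1, h2⟩
    refine ⟨c.rev, b.rev, a.rev, ?_, ?_, ?_, ?_⟩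
    · exact Fin.rev_lt_rev.mpr hbc
    · exact Fin.rev_lt_rev.mpr hab
    · simpa [Equiv.Perm.mul_apply, Fin.rev_rev] using h2
    · simpa [Equiv.Perm.mul_apply, Fin.rev_rev] using h1
  · rintro ⟨i, j, k, hij, hjk, h1, h2⟩
    refine ⟨k.rev, j.rev, i.rev, ?_, ?_, ?_, ?_⟩
    · exact Fin.rev_lt_rev.mpr hjk
    · exact Fin.rev_lt_rev.mpr hij
    · simpa [Equiv.Perm.mul_apply] using h2
    · simpa [Equiv.Perm.mul_apply] using h1

lemma card_avoid123_eq_card_avoid321 :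
    (univ.filter fun σ : Equiv.Perm (Fin n) =>
      ¬ ∃ i j k : Fin n, i < j ∧ j < k ∧ σ i < σ j ∧ σ j < σ k).card =
    (univ.filter fun σ : Equiv.Perm (Fin n) => Avoid321 σ).card := by
  classical
  apply Finset.card_bij (fun σ _ => σ * Fin.revPerm)
  · intro σ hσ
    rw [Finset.mem_filter] at hσ ⊢
    exact ⟨mem_univ _, (avoid123_iff σ).mp hσ.2⟩
  · intro a ha b hb hab
    exact mul_right_cancel hab
  · intro τ hτ
    rw [Finset.mem_filter] at hτ
    have hinv : τ * Fin.revPerm * Fin.revPerm = τ := by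
      rw [mul_assoc]
      convert mul_one τ
      apply Equiv.ext
      intro x
      simp [Equiv.Perm.mul_apply, Fin.rev_rev]
    refine ⟨τ * Fin.revPerm, ?_, hinv⟩
    rw [Finset.mem_filter]
    refine ⟨mem_univ _, ?_⟩
    rw [avoid123_iff, hinv]
    exact hτ.2

lemma card_avoid321_eq_card_dom_pairs :
    (univ.filter fun σ : Equiv.Perm (Fin n) => Avoid321 σ).card =
    (univ.filter (fun PV : Finset (Fin n) × Finset (Fin n) => Dom PV.1 PV.2)).card := by
  classical
  refine Finset.card_bij' (fun σ _ => (excP σ, excV σ))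
    (fun PV hPV => fillPerm (P := PV.1) (V := PV.2)
      ((Finset.mem_filter.mp hPV).2).1) ?_ ?_ ?_ ?_
  · intro σ hσ
    rw [Finset.mem_filter]
    exact ⟨mem_univ _, dom_exc σ⟩
  · intro PV hPV
    rw [Finset.mem_filter]
    exact ⟨mem_univ _, fill_avoids _⟩
  · intro σ hσ
    rw [Finset.mem_filter] at hσ
    exact (avoid_eq_fill hσ.2).symm
  · intro PV hPV
    rw [Finset.mem_filter] at hPV
    have := exc_fill ((hPV.2).1) hPV.2
    rw [Prod.ext_iff]
    exact ⟨this.1, this.2⟩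



end Assemble

end CatalanAux

/-- The number of permutations of `Fin g` avoiding the pattern `1,2,3`
(no indices `i < j < k` with `σ i < σ j < σ k`) equals the `g`-th Catalan number. -/
theorem card_pattern_123_avoiding_perms (g : ℕ) :
    (Finset.univ.filter fun σ : Equiv.Perm (Fin g) =>
      ¬ ∃ i j k : Fin g, i < j ∧ j < k ∧ σ i < σ j ∧ σ j < σ k).card = catalan g := by
  rw [CatalanAux.card_avoid123_eq_card_avoid321,
    CatalanAux.card_avoid321_eq_card_dom_pairs, CatalanAux.card_dom_pairs]
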